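/- arXiv:2312.14728 — 5 statements merged into one kernel-verified Lean document; each statement's English description precedes it below -/
import Mathlib

section
/- If G and F are distribution functions on ℝ such that G^{-1}(v) − G^{-1}(u) ≥ F^{-1}(v) − F^{-1}(u) for all 0 < u < v < 1 (G is at least as spread out as F), and both distributions have finite second moments, then the variance of G is at least the variance of F. -/
open MeasureTheory Set intervalIntegral

noncomputable def VMSO.μ01 : Measure ℝ := volume.restrict (Ioo 0 1)

instance : IsProbabilityMeasure VMSO.μ01 := ⟨by simp [VMSO.μ01, Real.volume_Ioo]⟩

namespace VMSO

/-- Generalized inverse of a CDF is monotone on `(0,1)`. -/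
lemma monoInv (F : ℝ → ℝ) (hFmono : Monotone F)
    (hF0 : Filter.Tendsto F Filter.atBot (nhds 0))
    (hF1 : Filter.Tendsto F Filter.atTop (nhds 1))
    (Finv : ℝ → ℝ) (hFinv : ∀ u, Finv u = sInf {x : ℝ | u ≤ F x}) :
    MonotoneOn Finv (Ioo 0 1) := by
  intro u hu v hv huv
  rw [hFinv u, hFinv v]
  apply csInf_le_csInf
  · obtain ⟨x0, hx0⟩ := ((hF0.eventually (eventually_lt_nhds hu.1)).exists)
    exact ⟨x0, fun x hx => by
      by_contra h
      exact absurd (le_trans hx (hFmono (le_of_lt (not_le.mp h)))) (not_le.mpr hx0)⟩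
  · obtain ⟨x1, hx1⟩ := ((hF1.eventually (eventually_gt_nhds hv.2)).exists)
    exact ⟨x1, le_of_lt hx1⟩
  · intro x hx
    exact le_trans huv hx

lemma int_of_sq (f : ℝ → ℝ) (hm : AEStronglyMeasurable f μ01)
    (h2 : Integrable (fun u => f u ^ 2) μ01) : Integrable f μ01 := by
  refine (h2.add (integrable_const 1)).mono' hm ?_
  filter_upwards with u
  have h : f u ^ 2 = |f u| ^ 2 := (sq_abs _).symm
  simp only [Real.norm_eq_abs, Pi.add_apply]
  nlinarith [sq_nonneg (|f u| - 1), abs_nonneg (f u)]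

lemma inner_eq (f : ℝ → ℝ) (h1 : Integrable f μ01)
    (h2 : Integrable (fun u => f u ^ 2) μ01) (u : ℝ) :
    ∫ v, (f v - f u) ^ 2 ∂μ01
      = (∫ v, f v ^ 2 ∂μ01) - 2 * (∫ v, f v ∂μ01) * f u + f u ^ 2 := by
  have hi : Integrable (fun v => f v ^ 2 - 2 * f u * f v) μ01 := h2.sub (h1.const_mul _)
  have h : (fun v => (f v - f u) ^ 2)
      = fun v => (f v ^ 2 - 2 * f u * f v) + f u ^ 2 := by
    funext v; ring
  rw [h, integral_add hi (integrable_const _),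
    integral_sub h2 (h1.const_mul _), MeasureTheory.integral_const_mul,
    MeasureTheory.integral_const]
  simp
  ring

lemma outer_eq (f : ℝ → ℝ) (h1 : Integrable f μ01)
    (h2 : Integrable (fun u => f u ^ 2) μ01) :
    ∫ u, ∫ v, (f v - f u) ^ 2 ∂μ01 ∂μ01
      = 2 * (∫ v, f v ^ 2 ∂μ01) - 2 * (∫ v, f v ∂μ01) ^ 2 := by
  set B := ∫ v, f v ^ 2 ∂μ01
  set A := ∫ v, f v ∂μ01
  have h : (fun u => ∫ v, (f v - f u) ^ 2 ∂μ01)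
      = fun u => (B - 2 * A * f u) + f u ^ 2 := by
    funext u; exact inner_eq f h1 h2 u
  have hi : Integrable (fun u => B - 2 * A * f u) μ01 :=
    (integrable_const B).sub (h1.const_mul _)
  rw [h, integral_add hi h2,
    integral_sub (integrable_const B) (h1.const_mul _),
    MeasureTheory.integral_const_mul, MeasureTheory.integral_const]
  simp
  ring

lemma outer_int (f : ℝ → ℝ) (h1 : Integrable f μ01)
    (h2 : Integrable (fun u => f u ^ 2) μ01) :
    Integrable (fun u => ∫ v, (f v - f u) ^ 2 ∂μ01) μ01 := by
  have h : (fun u => ∫ v, (f v - f u) ^ 2 ∂μ01)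
      = fun u => ((∫ v, f v ^ 2 ∂μ01) - 2 * (∫ v, f v ∂μ01) * f u) + f u ^ 2 := by
    funext u; exact inner_eq f h1 h2 u
  rw [h]
  exact ((integrable_const _).sub (h1.const_mul _)).add h2

end VMSO

open VMSO

/-- If `G` is at least as spread out as `F` (quantiles at least as far apart),
then the variance of `G` is at least the variance of `F`. -/
theorem variance_mono_of_spread_order
    (F G : ℝ → ℝ)
    (hFmono : Monotone F) (hGmono : Monotone G)
    (hFrc : ∀ x, ContinuousWithinAt F (Ici x) x)
    (hGrc : ∀ x, ContinuousWithinAt G (Ici x) x)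
    (hF0 : Filter.Tendsto F Filter.atBot (nhds 0))
    (hF1 : Filter.Tendsto F Filter.atTop (nhds 1))
    (hG0 : Filter.Tendsto G Filter.atBot (nhds 0))
    (hG1 : Filter.Tendsto G Filter.atTop (nhds 1))
    (Finv Ginv : ℝ → ℝ)
    (hFinv : ∀ u, Finv u = sInf {x : ℝ | u ≤ F x})
    (hGinv : ∀ u, Ginv u = sInf {x : ℝ | u ≤ G x})
    -- finite second moments
    (hFint2 : IntervalIntegrable (fun u => (Finv u) ^ 2) volume 0 1)
    (hGint2 : IntervalIntegrable (fun u => (Ginv u) ^ 2) volume 0 1)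
    -- spread order: G ≥_s F
    (hspread : ∀ u v : ℝ, 0 < u → u < v → v < 1 →
      Finv v - Finv u ≤ Ginv v - Ginv u) :
    (∫ u in (0:ℝ)..1, (Finv u) ^ 2) - (∫ u in (0:ℝ)..1, Finv u) ^ 2 ≤
      (∫ u in (0:ℝ)..1, (Ginv u) ^ 2) - (∫ u in (0:ℝ)..1, Ginv u) ^ 2 := by
  -- monotonicity of the quantile functions on (0,1)
  have hFm : MonotoneOn Finv (Ioo 0 1) := monoInv F hFmono hF0 hF1 Finv hFinv
  have hGm : MonotoneOn Ginv (Ioo 0 1) := monoInv G hGmono hG0 hG1 Ginv hGinv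
  -- measurability
  have hFmeas : AEStronglyMeasurable Finv μ01 :=
    (aemeasurable_restrict_of_monotoneOn measurableSet_Ioo hFm).aestronglyMeasurable
  have hGmeas : AEStronglyMeasurable Ginv μ01 :=
    (aemeasurable_restrict_of_monotoneOn measurableSet_Ioo hGm).aestronglyMeasurable
  -- integrability over (0,1)
  have hF2 : Integrable (fun u => Finv u ^ 2) μ01 := by
    have := (intervalIntegrable_iff_integrableOn_Ioo_of_le (by norm_num : (0:ℝ) ≤ 1)).mp hFint2
    exact this
  have hG2 : Integrable (fun u => Ginv u ^ 2) μ01 := by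
    have := (intervalIntegrable_iff_integrableOn_Ioo_of_le (by norm_num : (0:ℝ) ≤ 1)).mp hGint2
    exact this
  have hF1' : Integrable Finv μ01 := int_of_sq Finv hFmeas hF2
  have hG1' : Integrable Ginv μ01 := int_of_sq Ginv hGmeas hG2
  -- pointwise comparison of inner integrals
  have hinner : ∀ u ∈ Ioo (0:ℝ) 1,
      (∫ v, (Finv v - Finv u) ^ 2 ∂μ01) ≤ ∫ v, (Ginv v - Ginv u) ^ 2 ∂μ01 := by
    intro u hu
    apply MeasureTheory.integral_mono_ae
    · have hi : Integrable (fun v => Finv v ^ 2 - 2 * Finv u * Finv v) μ01 :=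
        hF2.sub (hF1'.const_mul _)
      have h : (fun v => (Finv v - Finv u) ^ 2)
          = fun v => (Finv v ^ 2 - 2 * Finv u * Finv v) + Finv u ^ 2 := by
        funext v; ring
      rw [h]; exact hi.add (integrable_const _)
    · have hi : Integrable (fun v => Ginv v ^ 2 - 2 * Ginv u * Ginv v) μ01 :=
        hG2.sub (hG1'.const_mul _)
      have h : (fun v => (Ginv v - Ginv u) ^ 2)
          = fun v => (Ginv v ^ 2 - 2 * Ginv u * Ginv v) + Ginv u ^ 2 := by
        funext v; ring
      rw [h]; exact hi.add (integrable_const _)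
    · have hne : ∀ᵐ v ∂μ01, v ≠ u := by
        refine (ae_iff).2 ?_
        have h : {v : ℝ | ¬ v ≠ u} = {u} := by ext v; simp
        rw [h]
        exact le_antisymm (le_trans (Measure.restrict_le_self _) (by simp)) zero_le
      have hmem : ∀ᵐ v ∂μ01, v ∈ Ioo (0:ℝ) 1 := ae_restrict_mem measurableSet_Ioo
      filter_upwards [hne, hmem] with v hvne hv
      rcases lt_or_gt_of_ne hvne with hlt | hgt
      · -- v < u
        have h1 : 0 ≤ Finv u - Finv v := sub_nonneg.mpr (hFm hv hu hlt.le)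
        have h2 : Finv u - Finv v ≤ Ginv u - Ginv v := hspread v u hv.1 hlt hu.2
        have := mul_self_le_mul_self h1 h2
        nlinarith
      · -- u < v
        have h1 : 0 ≤ Finv v - Finv u := sub_nonneg.mpr (hFm hu hv hgt.le)
        have h2 : Finv v - Finv u ≤ Ginv v - Ginv u := hspread u v hu.1 hgt hv.2
        have := mul_self_le_mul_self h1 h2
        nlinarith
  -- integrate the comparison
  have houter : (∫ u, ∫ v, (Finv v - Finv u) ^ 2 ∂μ01 ∂μ01)
      ≤ ∫ u, ∫ v, (Ginv v - Ginv u) ^ 2 ∂μ01 ∂μ01 := by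
    apply MeasureTheory.integral_mono_ae (outer_int Finv hF1' hF2) (outer_int Ginv hG1' hG2)
    filter_upwards [ae_restrict_mem measurableSet_Ioo] with u hu
    exact hinner u hu
  rw [outer_eq Finv hF1' hF2, outer_eq Ginv hG1' hG2] at houter
  have goalIoo : ∀ f : ℝ → ℝ, (∫ u in (0:ℝ)..1, f u) = ∫ u, f u ∂μ01 := by
    intro f
    rw [intervalIntegral.integral_of_le (by norm_num : (0:ℝ) ≤ 1),
      MeasureTheory.integral_Ioc_eq_integral_Ioo]
    rfl
  rw [goalIoo, goalIoo, goalIoo, goalIoo]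
  linarith
end

section
/- Vitali's theorem: Let (X, μ) be a measure space, 0 < p < ∞, and let f_n, f be measurable functions with f_n → f μ-almost everywhere. If limsup_n ∫ |f_n|^p dμ ≤ ∫ |f|^p dμ < ∞, then ∫ |f_n − f|^p dμ → 0. -/
open MeasureTheory Filter
open scoped ENNReal

private lemma ennreal_le_limsup_add {f : Filter ℕ} [f.NeBot] {u v : ℕ → ℝ≥0∞} :
    limsup u f + liminf v f ≤ limsup (fun n => u n + v n) f := by
  rcases eq_or_ne (limsup u f) 0 with h0 | h0
  · rw [h0, zero_add]
    calc liminf v f ≤ liminf (fun n => u n + v n) f :=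
          liminf_le_liminf (Eventually.of_forall fun n => le_add_self)
      _ ≤ limsup (fun n => u n + v n) f := liminf_le_limsup
  rcases eq_or_ne (liminf v f) 0 with h1 | h1
  · rw [h1, add_zero]
    exact limsup_le_limsup (Eventually.of_forall fun n => self_le_add_right _ _)
  · rw [← not_lt]; intro hlt
    obtain ⟨a, ha, b, hb, hab⟩ := ENNReal.exists_lt_add_of_lt_add hlt h0 h1
    have h2 : ∀ᶠ n in f, b < v n := eventually_lt_of_lt_liminf hb
    have h3 : ∃ᶠ n in f, a < u n := frequently_lt_of_lt_limsup (by isBoundedDefault) ha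
    have h4 : ∃ᶠ n in f, a + b ≤ u n + v n :=
      (h3.and_eventually h2).mono fun n hn => (ENNReal.add_lt_add hn.1 hn.2).le
    exact (hab.trans_le (le_limsup_of_frequently_le h4)).false

private lemma abs_sub_rpow_le {p : ℝ} (hp : 0 < p) (a b : ℝ) :
    |a - b| ^ p ≤ 2 ^ p * (|a| ^ p + |b| ^ p) := by
  have h1 : |a - b| ≤ 2 * max |a| |b| := by
    refine (abs_sub a b).trans ?_
    rcases le_total |a| |b| with h | h
    · nlinarith [le_max_right |a| |b|, abs_nonneg a]
    · nlinarith [le_max_left |a| |b|, abs_nonneg b]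
  calc |a - b| ^ p ≤ (2 * max |a| |b|) ^ p := Real.rpow_le_rpow (abs_nonneg _) h1 hp.le
    _ = 2 ^ p * (max |a| |b|) ^ p := Real.mul_rpow (by norm_num) (le_max_of_le_left (abs_nonneg a))
    _ ≤ 2 ^ p * (|a| ^ p + |b| ^ p) := by
        refine mul_le_mul_of_nonneg_left ?_ (Real.rpow_nonneg (by norm_num) p)
        rcases max_choice |a| |b| with h | h <;> rw [h]
        · exact le_add_of_nonneg_right (Real.rpow_nonneg (abs_nonneg b) p)
        · exact le_add_of_nonneg_left (Real.rpow_nonneg (abs_nonneg a) p)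

/-- Vitali's theorem: a.e. convergence together with `limsup ∫|fₙ|ᵖ ≤ ∫|f|ᵖ < ∞`
implies convergence in `Lᵖ` (i.e. `∫|fₙ − f|ᵖ → 0`). -/
theorem vitali_convergence
    {X : Type*} [MeasurableSpace X] (μ : Measure X)
    (p : ℝ) (hp : 0 < p)
    (f : ℕ → X → ℝ) (g : X → ℝ)
    (hf : ∀ n, Measurable (f n)) (hg : Measurable g)
    (hae : ∀ᵐ x ∂μ, Tendsto (fun n => f n x) atTop (nhds (g x)))
    (hfin : ∫⁻ x, ENNReal.ofReal (|g x| ^ p) ∂μ < ⊤)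
    (hlimsup : limsup (fun n => ∫⁻ x, ENNReal.ofReal (|f n x| ^ p) ∂μ) atTop
      ≤ ∫⁻ x, ENNReal.ofReal (|g x| ^ p) ∂μ) :
    Tendsto (fun n => ∫⁻ x, ENNReal.ofReal (|f n x - g x| ^ p) ∂μ) atTop (nhds 0) := by
  set C : ℝ≥0∞ := ENNReal.ofReal (2 ^ p) with hCdef
  have hC : C ≠ ⊤ := ENNReal.ofReal_ne_top
  set G : ℝ≥0∞ := ∫⁻ x, ENNReal.ofReal (|g x| ^ p) ∂μ with hGdef
  have hG : G ≠ ⊤ := hfin.ne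
  set D : ℕ → ℝ≥0∞ := fun n => ∫⁻ x, ENNReal.ofReal (|f n x - g x| ^ p) ∂μ with hDdef
  set Fn : ℕ → ℝ≥0∞ := fun n => ∫⁻ x, ENNReal.ofReal (|f n x| ^ p) ∂μ with hFndef
  set h : ℕ → X → ℝ := fun n x => 2 ^ p * (|f n x| ^ p + |g x| ^ p) - |f n x - g x| ^ p
    with hhdef
  have hh_nonneg : ∀ n x, 0 ≤ h n x := fun n x => sub_nonneg.2 (abs_sub_rpow_le hp _ _)
  set φ : ℕ → X → ℝ≥0∞ := fun n x => ENNReal.ofReal (h n x) with hφdef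
  have meas_aux : ∀ u : X → ℝ, Measurable u →
      Measurable fun x => ENNReal.ofReal (|u x| ^ p) := fun u hu =>
    (((Real.continuous_rpow_const hp.le).measurable.comp hu.abs)).ennreal_ofReal
  have measp : ∀ u : X → ℝ, Measurable u → Measurable fun x => |u x| ^ p := fun u hu =>
    (Real.continuous_rpow_const hp.le).measurable.comp hu.abs
  have hφmeas : ∀ n, Measurable (φ n) := fun n =>
    ((measurable_const.mul ((measp _ (hf n)).add (measp _ hg))).sub
      (measp _ ((hf n).sub hg))).ennreal_ofReal
  -- pointwise decomposition
  have key : ∀ n x, φ n x + ENNReal.ofReal (|f n x - g x| ^ p) =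
      C * (ENNReal.ofReal (|f n x| ^ p) + ENNReal.ofReal (|g x| ^ p)) := by
    intro n x
    rw [hφdef]
    rw [← ENNReal.ofReal_add (hh_nonneg n x) (Real.rpow_nonneg (abs_nonneg _) p)]
    rw [hhdef]
    simp only [sub_add_cancel]
    rw [hCdef, ← ENNReal.ofReal_add (Real.rpow_nonneg (abs_nonneg _) p)
      (Real.rpow_nonneg (abs_nonneg _) p),
      ← ENNReal.ofReal_mul (Real.rpow_nonneg (by norm_num) p)]
  -- integral identity
  have keyint : ∀ n, (∫⁻ x, φ n x ∂μ) + D n = C * (Fn n + G) := by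
    intro n
    rw [hDdef, ← lintegral_add_left (hφmeas n)]
    simp_rw [key]
    rw [lintegral_const_mul (f := fun x => ENNReal.ofReal (|f n x| ^ p) + ENNReal.ofReal (|g x| ^ p))
        _ ((meas_aux _ (hf n)).add (meas_aux _ hg)),
      lintegral_add_left (meas_aux _ (hf n))]
  -- a.e. identification of liminf φ
  have hlim : ∀ᵐ x ∂μ, liminf (fun n => φ n x) atTop =
      C * (ENNReal.ofReal (|g x| ^ p) + ENNReal.ofReal (|g x| ^ p)) := by
    refine hae.mono fun x hx => ?_
    have h1 : Tendsto (fun n => |f n x| ^ p) atTop (nhds (|g x| ^ p)) :=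
      (hx.abs).rpow_const (Or.inr hp.le)
    have h2 : Tendsto (fun n => |f n x - g x| ^ p) atTop (nhds 0) := by
      have h2a : Tendsto (fun n => |f n x - g x|) atTop (nhds 0) := by
        simpa using ((hx.sub_const (g x)).abs)
      have h2b := h2a.rpow_const (Or.inr hp.le)
      simpa [Real.zero_rpow hp.ne'] using h2b
    have h3 : Tendsto (fun n => h n x) atTop
        (nhds (2 ^ p * (|g x| ^ p + |g x| ^ p) - 0)) :=
      (tendsto_const_nhds.mul (h1.add tendsto_const_nhds)).sub h2
    have h4 : Tendsto (fun n => φ n x) atTop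
        (nhds (ENNReal.ofReal (2 ^ p * (|g x| ^ p + |g x| ^ p) - 0))) :=
      (ENNReal.continuous_ofReal.tendsto _).comp h3
    rw [h4.liminf_eq, sub_zero, hCdef,
      ← ENNReal.ofReal_add (Real.rpow_nonneg (abs_nonneg _) p)
        (Real.rpow_nonneg (abs_nonneg _) p),
      ← ENNReal.ofReal_mul (Real.rpow_nonneg (by norm_num) p)]
  -- Fatou lower bound
  have hlow : C * (G + G) ≤ liminf (fun n => ∫⁻ x, φ n x ∂μ) atTop := by
    have e1 : C * (G + G) =
        ∫⁻ x, C * (ENNReal.ofReal (|g x| ^ p) + ENNReal.ofReal (|g x| ^ p)) ∂μ := by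
      rw [lintegral_const_mul (f := fun x => ENNReal.ofReal (|g x| ^ p) + ENNReal.ofReal (|g x| ^ p))
        _ ((meas_aux _ hg).add (meas_aux _ hg)),
        lintegral_add_left (meas_aux _ hg)]
    rw [e1, ← lintegral_congr_ae hlim]
    exact lintegral_liminf_le hφmeas
  -- upper bound for the limsup of the sum
  have hup : limsup (fun n => D n + ∫⁻ x, φ n x ∂μ) atTop ≤ C * (G + G) := by
    have e2 : (fun n => D n + ∫⁻ x, φ n x ∂μ) = fun n => C * (Fn n + G) := by
      funext n; rw [add_comm, keyint n]
    rw [e2, ENNReal.limsup_const_mul_of_ne_top hC,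
      limsup_add_const atTop Fn G ⟨⊤, Eventually.of_forall fun _ => le_top⟩
        isCobounded_le_of_bot]
    exact mul_le_mul_right (add_le_add_left hlimsup _) _
  -- combine
  have hchain : limsup D atTop + C * (G + G) ≤ C * (G + G) :=
    calc limsup D atTop + C * (G + G)
        ≤ limsup D atTop + liminf (fun n => ∫⁻ x, φ n x ∂μ) atTop :=
          add_le_add_right hlow _
      _ ≤ limsup (fun n => D n + ∫⁻ x, φ n x ∂μ) atTop := ennreal_le_limsup_add
      _ ≤ C * (G + G) := hup
  have hCG : C * (G + G) ≠ ⊤ := ENNReal.mul_ne_top hC (ENNReal.add_ne_top.2 ⟨hG, hG⟩)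
  have hD0 : limsup D atTop = 0 := by
    have : limsup D atTop + C * (G + G) ≤ 0 + C * (G + G) := by rwa [zero_add]
    simpa using (ENNReal.add_le_add_iff_right hCG).1 this
  have hD1 : liminf D atTop = 0 :=
    le_antisymm (hD0 ▸ liminf_le_limsup) zero_le
  exact tendsto_of_liminf_eq_limsup hD1 hD0
end

section
/- Perturbation of a distribution function: Let F be a distribution function on ℝ, t ∈ ℝ, and 0 ≤ ε ≤ 1. Then F_ε defined by F_ε(x) = F(x) − ε·(F(x ∧ t) − F(x)·F(t)) is again a distribution function (monotone nondecreasing, right-continuous, tending to 0 at −∞ and to 1 at +∞), and F_0 = F. -/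
open Set Filter

/-- The perturbation `F_ε(x) = F(x) − ε(F(x ∧ t) − F(x)F(t))` of a distribution
function `F` is again a distribution function, and `F_0 = F`. -/
theorem perturbed_cdf_is_cdf
    (F : ℝ → ℝ)
    (hmono : Monotone F)
    (hrc : ∀ x, ContinuousWithinAt F (Ici x) x)
    (h0 : Tendsto F atBot (nhds 0))
    (h1 : Tendsto F atTop (nhds 1))
    (t : ℝ) (ε : ℝ) (hε0 : 0 ≤ ε) (hε1 : ε ≤ 1)
    (Fe : ℝ → ℝ)
    (hFe : ∀ x, Fe x = F x - ε * (F (min x t) - F x * F t)) :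
    Monotone Fe ∧ (∀ x, ContinuousWithinAt Fe (Ici x) x) ∧
      Tendsto Fe atBot (nhds 0) ∧ Tendsto Fe atTop (nhds 1) ∧
      (ε = 0 → Fe = F) := by
  have hFnn : ∀ x, 0 ≤ F x := by
    intro x
    exact le_of_tendsto h0 (eventually_atBot.2 ⟨x, fun y hy => hmono hy⟩)
  have hFle : ∀ x, F x ≤ 1 := by
    intro x
    exact ge_of_tendsto h1 (eventually_atTop.2 ⟨x, fun y hy => hmono hy⟩)
  -- monotone below t
  have key1 : ∀ a b, a ≤ b → b ≤ t → Fe a ≤ Fe b := by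
    intro a b hab hbt
    rw [hFe, hFe, min_eq_left (hab.trans hbt), min_eq_left hbt]
    have h1 := hmono hab
    have h2 := hFnn t
    have h3 := hFle t
    have hc : ε * (1 - F t) ≤ 1 := by nlinarith
    nlinarith [mul_nonneg (sub_nonneg.2 h1) (sub_nonneg.2 hc)]
  have key2 : ∀ a b, a ≤ b → t ≤ a → Fe a ≤ Fe b := by
    intro a b hab hta
    rw [hFe, hFe, min_eq_right hta, min_eq_right (hta.trans hab)]
    have h1 := hmono hab
    have h2 := hFnn t
    nlinarith [mul_nonneg (sub_nonneg.2 h1) (show (0:ℝ) ≤ 1 + ε * F t by nlinarith)]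
  have hmonoE : Monotone Fe := by
    intro a b hab
    rcases le_total b t with h | h
    · exact key1 a b hab h
    · rcases le_total t a with h' | h'
      · exact key2 a b hab h'
      · exact (key1 a t h' le_rfl).trans (key2 t b h le_rfl)
  refine ⟨hmonoE, ?_, ?_, ?_, ?_⟩
  · intro x
    have hmin : ContinuousWithinAt (fun y => min y t) (Ici x) x :=
      (continuous_id.min continuous_const).continuousWithinAt
    have hg : ContinuousWithinAt (fun y => F (min y t)) (Ici x) x :=
      ContinuousWithinAt.comp (g := F) (f := fun y => min y t)
        (hrc (min x t)) hmin (fun y hy => Set.mem_Ici.2 (min_le_min (Set.mem_Ici.1 hy) le_rfl))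
    have : ContinuousWithinAt (fun y => F y - ε * (F (min y t) - F y * F t)) (Ici x) x :=
      (hrc x).sub (continuousWithinAt_const.mul (hg.sub ((hrc x).mul continuousWithinAt_const)))
    exact this.congr (fun y _ => hFe y) (hFe x)
  · have hminBot : Tendsto (fun y : ℝ => min y t) atBot atBot :=
      tendsto_atBot_mono (fun y => min_le_left y t) tendsto_id
    have hg : Tendsto (fun y => F (min y t)) atBot (nhds 0) := h0.comp hminBot
    have : Tendsto (fun y => F y - ε * (F (min y t) - F y * F t)) atBot
        (nhds (0 - ε * (0 - 0 * F t))) :=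
      h0.sub (tendsto_const_nhds.mul (hg.sub (h0.mul tendsto_const_nhds)))
    simpa using this.congr (fun y => (hFe y).symm)
  · have hev : ∀ᶠ y in atTop, F y - ε * (F t - F y * F t) = Fe y := by
      filter_upwards [eventually_ge_atTop t] with y hy
      rw [hFe, min_eq_right hy]
    have : Tendsto (fun y => F y - ε * (F t - F y * F t)) atTop
        (nhds (1 - ε * (F t - 1 * F t))) :=
      h1.sub (tendsto_const_nhds.mul (tendsto_const_nhds.sub (h1.mul tendsto_const_nhds)))
    simpa using Tendsto.congr' hev this
  · intro hε
    funext x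
    simp [hFe, hε]
end

section
/- Van Zwet density bound implies triangular spread bound: Let G be a distribution function on ℝ with density g satisfying g(G^{-1}(s)) ≤ (c·(s ∧ (1−s)))^{1/2} for all s ∈ (0,1), where c > 0. Then G is at least as spread out as the symmetric triangular distribution with support [−√(2/c), √(2/c)], i.e. G^{-1}(v) − G^{-1}(u) ≥ K^{-1}(v) − K^{-1}(u) for all 0 < u < v < 1, where K is the distribution function of the symmetric triangular distribution on [−√(2/c), √(2/c)]. -/
open MeasureTheory Set

private lemma vz_amgm {a b : ℝ} (ha : 0 ≤ a) (hb : 0 ≤ b) :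
    (Real.sqrt b - Real.sqrt a) * Real.sqrt a ≤ (b - a) / 2 := by
  have h1 : Real.sqrt a ^ 2 = a := Real.sq_sqrt ha
  have h2 : Real.sqrt b ^ 2 = b := Real.sq_sqrt hb
  nlinarith [sq_nonneg (Real.sqrt b - Real.sqrt a)]

private lemma vz_sqrt_mul_sqrt {c s : ℝ} (hc : 0 < c) (hs : 0 ≤ s) :
    Real.sqrt (2 / c) * Real.sqrt (c * s) = Real.sqrt (2 * s) := by
  rw [← Real.sqrt_mul (by positivity)]
  congr 1
  field_simp

private lemma vz_kinv_left {c s s' : ℝ} (hc : 0 < c) (h0 : 0 ≤ s) (hss' : s ≤ s') :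
    (Real.sqrt (2 / c) * (Real.sqrt (2 * s') - 1) -
      Real.sqrt (2 / c) * (Real.sqrt (2 * s) - 1)) * Real.sqrt (c * s) ≤ s' - s := by
  have key : (Real.sqrt (2 * s') - Real.sqrt (2 * s)) * Real.sqrt (2 * s) ≤ s' - s := by
    have := vz_amgm (a := 2 * s) (b := 2 * s') (by linarith) (by linarith)
    linarith
  calc (Real.sqrt (2 / c) * (Real.sqrt (2 * s') - 1) -
      Real.sqrt (2 / c) * (Real.sqrt (2 * s) - 1)) * Real.sqrt (c * s)
      = (Real.sqrt (2 * s') - Real.sqrt (2 * s)) * (Real.sqrt (2 / c) * Real.sqrt (c * s)) := by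
        ring
    _ = (Real.sqrt (2 * s') - Real.sqrt (2 * s)) * Real.sqrt (2 * s) := by
        rw [vz_sqrt_mul_sqrt hc h0]
    _ ≤ s' - s := key

private lemma vz_kinv_right {c s s' : ℝ} (hc : 0 < c) (hss' : s ≤ s') (h1 : s' ≤ 1) :
    (Real.sqrt (2 / c) * (1 - Real.sqrt (2 * (1 - s'))) -
      Real.sqrt (2 / c) * (1 - Real.sqrt (2 * (1 - s)))) * Real.sqrt (c * (1 - s')) ≤ s' - s := by
  have key : (Real.sqrt (2 * (1 - s)) - Real.sqrt (2 * (1 - s'))) * Real.sqrt (2 * (1 - s'))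
      ≤ (1 - s) - (1 - s') := by
    have := vz_amgm (a := 2 * (1 - s')) (b := 2 * (1 - s)) (by linarith) (by linarith)
    linarith
  calc (Real.sqrt (2 / c) * (1 - Real.sqrt (2 * (1 - s'))) -
      Real.sqrt (2 / c) * (1 - Real.sqrt (2 * (1 - s)))) * Real.sqrt (c * (1 - s'))
      = (Real.sqrt (2 * (1 - s)) - Real.sqrt (2 * (1 - s'))) *
          (Real.sqrt (2 / c) * Real.sqrt (c * (1 - s'))) := by ring
    _ = (Real.sqrt (2 * (1 - s)) - Real.sqrt (2 * (1 - s'))) * Real.sqrt (2 * (1 - s')) := by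
        rw [vz_sqrt_mul_sqrt hc (by linarith)]
    _ ≤ s' - s := by linarith

noncomputable def vzK (c s : ℝ) : ℝ :=
  if s ≤ 1 / 2 then Real.sqrt (2 / c) * (Real.sqrt (2 * s) - 1)
  else Real.sqrt (2 / c) * (1 - Real.sqrt (2 * (1 - s)))

private lemma vzK_continuous (c : ℝ) : Continuous (vzK c) := by
  unfold vzK
  apply Continuous.if_le
  · exact continuous_const.mul ((Real.continuous_sqrt.comp (continuous_const.mul continuous_id)).sub continuous_const)
  · exact continuous_const.mul (continuous_const.sub (Real.continuous_sqrt.comp (continuous_const.mul (continuous_const.sub continuous_id))))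
  · exact continuous_id
  · exact continuous_const
  · intro s hs
    subst hs
    norm_num

private lemma vzK_bound {c t t' : ℝ} (hc : 0 < c) (h0 : 0 < t) (htt' : t ≤ t') (h1 : t' < 1) :
    (vzK c t' - vzK c t) *
      Real.sqrt (c * min (min t (1 - t)) (min t' (1 - t'))) ≤ t' - t := by
  set p := min (min t (1 - t)) (min t' (1 - t')) with hp
  have hpt : p ≤ t := le_trans (min_le_left _ _) (min_le_left _ _)
  have hpt' : p ≤ 1 - t' := le_trans (min_le_right _ _) (min_le_right _ _)
  have hsp_t : Real.sqrt (c * p) ≤ Real.sqrt (c * t) :=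
    Real.sqrt_le_sqrt (by nlinarith)
  have hsp_t' : Real.sqrt (c * p) ≤ Real.sqrt (c * (1 - t')) :=
    Real.sqrt_le_sqrt (by nlinarith)
  have h2c : (0:ℝ) ≤ Real.sqrt (2 / c) := Real.sqrt_nonneg _
  by_cases hl : t' ≤ 1 / 2
  · have hlt : t ≤ 1 / 2 := le_trans htt' hl
    rw [vzK, vzK, if_pos hl, if_pos hlt]
    have hD : 0 ≤ Real.sqrt (2 / c) * (Real.sqrt (2 * t') - 1) -
        Real.sqrt (2 / c) * (Real.sqrt (2 * t) - 1) := by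
      have : Real.sqrt (2 * t) ≤ Real.sqrt (2 * t') := Real.sqrt_le_sqrt (by linarith)
      nlinarith
    calc _ ≤ (Real.sqrt (2 / c) * (Real.sqrt (2 * t') - 1) -
        Real.sqrt (2 / c) * (Real.sqrt (2 * t) - 1)) * Real.sqrt (c * t) :=
          mul_le_mul_of_nonneg_left hsp_t hD
      _ ≤ t' - t := vz_kinv_left hc h0.le htt'
  · push_neg at hl
    by_cases hr : t ≤ 1 / 2
    · -- straddle
      rw [vzK, vzK, if_neg (not_le.mpr hl), if_pos hr]
      have h11 : Real.sqrt (2 * (1/2 : ℝ)) = 1 := by norm_num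
      have h12 : Real.sqrt (2 * (1 - 1/2 : ℝ)) = 1 := by norm_num
      have hD1 : 0 ≤ - (Real.sqrt (2 / c) * (Real.sqrt (2 * t) - 1)) := by
        have : Real.sqrt (2 * t) ≤ 1 := by
          rw [← h11]; exact Real.sqrt_le_sqrt (by linarith)
        nlinarith
      have hD2 : 0 ≤ Real.sqrt (2 / c) * (1 - Real.sqrt (2 * (1 - t'))) := by
        have : Real.sqrt (2 * (1 - t')) ≤ 1 := by
          rw [← h12]; exact Real.sqrt_le_sqrt (by linarith)
        nlinarith
      have e1 : (Real.sqrt (2 / c) * (Real.sqrt (2 * (1/2:ℝ)) - 1) -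
          Real.sqrt (2 / c) * (Real.sqrt (2 * t) - 1)) * Real.sqrt (c * t)
          ≤ 1/2 - t := vz_kinv_left hc h0.le hr
      have e2 : (Real.sqrt (2 / c) * (1 - Real.sqrt (2 * (1 - t'))) -
          Real.sqrt (2 / c) * (1 - Real.sqrt (2 * (1 - (1/2:ℝ))))) * Real.sqrt (c * (1 - t'))
          ≤ t' - 1/2 := vz_kinv_right hc hl.le h1.le
      rw [h11] at e1
      rw [h12] at e2
      have e1' : (- (Real.sqrt (2 / c) * (Real.sqrt (2 * t) - 1))) * Real.sqrt (c * t)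
          ≤ 1/2 - t := by
        have : Real.sqrt (2 / c) * ((1:ℝ) - 1) = 0 := by ring
        nlinarith [e1]
      have e2' : (Real.sqrt (2 / c) * (1 - Real.sqrt (2 * (1 - t')))) * Real.sqrt (c * (1 - t'))
          ≤ t' - 1/2 := by nlinarith [e2]
      have c1 : (- (Real.sqrt (2 / c) * (Real.sqrt (2 * t) - 1))) * Real.sqrt (c * p)
          ≤ 1/2 - t :=
        le_trans (mul_le_mul_of_nonneg_left hsp_t hD1) e1'
      have c2 : (Real.sqrt (2 / c) * (1 - Real.sqrt (2 * (1 - t')))) * Real.sqrt (c * p)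
          ≤ t' - 1/2 :=
        le_trans (mul_le_mul_of_nonneg_left hsp_t' hD2) e2'
      nlinarith [c1, c2]
    · push_neg at hr
      rw [vzK, vzK, if_neg (not_le.mpr hl), if_neg (not_le.mpr hr)]
      have hD : 0 ≤ Real.sqrt (2 / c) * (1 - Real.sqrt (2 * (1 - t'))) -
          Real.sqrt (2 / c) * (1 - Real.sqrt (2 * (1 - t))) := by
        have : Real.sqrt (2 * (1 - t')) ≤ Real.sqrt (2 * (1 - t)) :=
          Real.sqrt_le_sqrt (by linarith)
        nlinarith
      calc _ ≤ (Real.sqrt (2 / c) * (1 - Real.sqrt (2 * (1 - t'))) -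
          Real.sqrt (2 / c) * (1 - Real.sqrt (2 * (1 - t)))) * Real.sqrt (c * (1 - t')) :=
            mul_le_mul_of_nonneg_left hsp_t' hD
        _ ≤ t' - t := vz_kinv_right hc htt' h1.le

section
variable {G g : ℝ → ℝ}

private lemma vz_integrable (hprob : (∫ y, g y) = 1) : Integrable g := by
  by_contra h
  rw [integral_undef h] at hprob; norm_num at hprob

private lemma vz_mono (hg_nonneg : ∀ x, 0 ≤ g x) (hint : Integrable g)
    (hdensity : ∀ x, G x = ∫ y in Iic x, g y) : Monotone G := fun x y hxy => by
  rw [hdensity x, hdensity y]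
  exact setIntegral_mono_set hint.integrableOn
    (Filter.Eventually.of_forall hg_nonneg) ((Iic_subset_Iic.mpr hxy).eventuallyLE)

private lemma vz_diff (hint : Integrable g)
    (hdensity : ∀ x, G x = ∫ y in Iic x, g y) {a b : ℝ} (hab : a ≤ b) :
    G b - G a = ∫ y in Ioc a b, g y := by
  rw [hdensity a, hdensity b, ← Iic_union_Ioc_eq_Iic hab,
    setIntegral_union (Iic_disjoint_Ioc le_rfl) measurableSet_Ioc
      hint.integrableOn hint.integrableOn]
  ring

private lemma vz_cont (hint : Integrable g)
    (hdensity : ∀ x, G x = ∫ y in Iic x, g y) : Continuous G := by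
  have h0 : ∀ x, G x = G 0 + ∫ t in (0:ℝ)..x, g t := by
    intro x
    rcases le_total 0 x with h | h
    · rw [intervalIntegral.integral_of_le h, ← vz_diff hint hdensity h]; ring
    · rw [intervalIntegral.integral_of_ge h, ← vz_diff hint hdensity h]; ring
  have hc : Continuous fun x => G 0 + ∫ t in (0:ℝ)..x, g t :=
    continuous_const.add
      (intervalIntegral.continuous_primitive (fun a b => hint.intervalIntegrable) 0)
  have : G = fun x => G 0 + ∫ t in (0:ℝ)..x, g t := funext h0
  rw [this]; exact hc

private lemma vz_exists_hi (hint : Integrable g) (hprob : (∫ y, g y) = 1)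
    (hdensity : ∀ x, G x = ∫ y in Iic x, g y) {t : ℝ} (ht : t < 1) : ∃ x, t ≤ G x := by
  have hu : (⋃ n : ℕ, Iic (n:ℝ)) = univ := by
    ext x
    simp only [mem_iUnion, mem_Iic, mem_univ, iff_true]
    exact exists_nat_ge x
  have h := tendsto_setIntegral_of_monotone (μ := volume) (f := g)
      (fun n : ℕ => measurableSet_Iic)
      (fun i j hij => Iic_subset_Iic.mpr (Nat.cast_le.mpr hij))
      (by rw [hu]; exact hint.integrableOn)
  rw [hu, setIntegral_univ, hprob] at h
  obtain ⟨n, hn⟩ := ((tendsto_order.mp h).1 t ht).exists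
  exact ⟨n, by rw [hdensity]; exact hn.le⟩

private lemma vz_exists_lo (hint : Integrable g)
    (hdensity : ∀ x, G x = ∫ y in Iic x, g y) {t : ℝ} (ht : 0 < t) : ∃ x, G x < t := by
  have hu : (⋂ n : ℕ, Iic (-(n:ℝ))) = ∅ := by
    ext x
    simp only [mem_iInter, mem_Iic, mem_empty_iff_false, iff_false, not_forall]
    obtain ⟨n, hn⟩ := exists_nat_gt (-x)
    exact ⟨n, by push_neg; linarith⟩
  have h := tendsto_setIntegral_of_antitone (μ := volume) (f := g)
      (fun n : ℕ => measurableSet_Iic)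
      (fun i j hij => Iic_subset_Iic.mpr (neg_le_neg (Nat.cast_le.mpr hij)))
      ⟨0, hint.integrableOn⟩
  rw [hu, setIntegral_empty] at h
  obtain ⟨n, hn⟩ := ((tendsto_order.mp h).2 t ht).exists
  exact ⟨-(n:ℝ), by rw [hdensity]; exact hn⟩

end

private lemma vz_crux {G g Ginv : ℝ → ℝ} {c : ℝ}
    (hc : 0 < c)
    (hg_meas : Measurable g) (hg_nonneg : ∀ x, 0 ≤ g x) (hint : Integrable g)
    (hdensity : ∀ x, G x = ∫ y in Iic x, g y)
    (hGmono : Monotone G) (hGcont : Continuous G)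
    (hbound : ∀ s, 0 < s → s < 1 → g (Ginv s) ≤ Real.sqrt (c * min s (1 - s)))
    (hGG : ∀ s, 0 < s → s < 1 → G (Ginv s) = s)
    (hle : ∀ x s, 0 < s → s ≤ G x → Ginv s ≤ x)
    {t t' : ℝ} (h0 : 0 < t) (htt' : t ≤ t') (h1 : t' < 1) :
    t' - t ≤ (Ginv t' - Ginv t) * Real.sqrt (c * min t' (1 - t)) := by
  set a := Ginv t with ha
  set b := Ginv t' with hb
  have hGa : G a = t := hGG t h0 (lt_of_le_of_lt htt' h1)
  have hGb : G b = t' := hGG t' (h0.trans_le htt') h1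
  have hab : a ≤ b := hle b t h0 (by rw [hGb]; exact htt')
  set H := Real.sqrt (c * min t' (1 - t)) with hH
  have hH0 : 0 ≤ H := Real.sqrt_nonneg _
  -- pointwise bound at growth points
  have hpt : ∀ x ∈ Ioc a b, Ginv (G x) = x → g x ≤ H := by
    intro x hx hgx
    have h1x : t ≤ G x := by rw [← hGa]; exact hGmono hx.1.le
    have h2x : G x ≤ t' := by rw [← hGb]; exact hGmono hx.2
    have h0x : 0 < G x := lt_of_lt_of_le h0 h1x
    have h1x' : G x < 1 := lt_of_le_of_lt h2x h1
    have hb1 := hbound (G x) h0x h1x'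
    rw [hgx] at hb1
    refine hb1.trans (Real.sqrt_le_sqrt ?_)
    have hmin : min (G x) (1 - G x) ≤ min t' (1 - t) :=
      le_min ((min_le_left _ _).trans h2x) ((min_le_right _ _).trans (by linarith))
    exact mul_le_mul_of_nonneg_left hmin hc.le
  -- the null set of non-growth points where g is nonzero
  set N := {x | x ∈ Ioc a b ∧ Ginv (G x) < x ∧ g x ≠ 0} with hN
  have hNnull : volume N = 0 := by
    have hNq : ∀ q : ℚ, volume {x | x ∈ Ioc a b ∧ G x = G (q:ℝ) ∧ Ginv (G (q:ℝ)) < x ∧ g x ≠ 0} = 0 := by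
      intro q
      set L := {x | x ∈ Ioc a b ∧ G x = G (q:ℝ) ∧ Ginv (G (q:ℝ)) < x} with hL
      rcases eq_empty_or_nonempty L with hLe | ⟨x₀, hx₀⟩
      · have hsub : {x | x ∈ Ioc a b ∧ G x = G (q:ℝ) ∧ Ginv (G (q:ℝ)) < x ∧ g x ≠ 0} ⊆ L := by
          intro x hx
          simp only [mem_setOf_eq] at hx ⊢
          exact ⟨hx.1, hx.2.1, hx.2.2.1⟩
        rw [hLe] at hsub
        exact measure_mono_null hsub measure_empty
      · -- bounds on G q
        have hGq1 : t ≤ G (q:ℝ) := by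
          rw [← hx₀.2.1, ← hGa]; exact hGmono hx₀.1.1.le
        have hGq2 : G (q:ℝ) ≤ t' := by
          rw [← hx₀.2.1, ← hGb]; exact hGmono hx₀.1.2
        have hGq0 : 0 < G (q:ℝ) := lt_of_lt_of_le h0 hGq1
        have hGq1' : G (q:ℝ) < 1 := lt_of_le_of_lt hGq2 h1
        set α := max a (Ginv (G (q:ℝ))) with hα
        set β := sSup L with hβ
        have hbdd : BddAbove L := ⟨b, fun x hx => hx.1.2⟩
        have hLsub : L ⊆ Ioc α β := by
          intro x hx
          exact ⟨max_lt hx.1.1 hx.2.2, le_csSup hbdd hx⟩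
        have hGβ : G β = G (q:ℝ) := by
          have hcl : IsClosed (G ⁻¹' {G (q:ℝ)}) := IsClosed.preimage hGcont isClosed_singleton
          have hsub2 : L ⊆ G ⁻¹' {G (q:ℝ)} := by
            intro x hx
            exact hx.2.1
          exact hcl.closure_subset_iff.mpr hsub2 (csSup_mem_closure ⟨x₀, hx₀⟩ hbdd)
        have hGα : G α = G (q:ℝ) := by
          rcases le_total a (Ginv (G (q:ℝ))) with hca | hca
          · rw [hα, max_eq_right hca]
            exact hGG _ hGq0 hGq1'
          · rw [hα, max_eq_left hca]
            refine le_antisymm ?_ ?_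
            · rw [← hx₀.2.1]; exact hGmono hx₀.1.1.le
            · have := hGmono hca
              rwa [hGG _ hGq0 hGq1'] at this
        have hαβ : α ≤ β := le_trans (hLsub hx₀).1.le (hLsub hx₀).2
        have hint0 : ∫ y in Ioc α β, g y = 0 := by
          rw [← vz_diff hint hdensity hαβ, hGα, hGβ]; ring
        have hzero : g =ᵐ[volume.restrict (Ioc α β)] 0 := by
          rw [← integral_eq_zero_iff_of_nonneg hg_nonneg hint.integrableOn]
          exact hint0
        have hmeas : MeasurableSet {x : ℝ | g x ≠ 0} :=
          (hg_meas (measurableSet_singleton 0)).compl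
        have hrest : volume ({x : ℝ | g x ≠ 0} ∩ Ioc α β) = 0 := by
          have hzero' : ∀ᵐ x ∂(volume.restrict (Ioc α β)), g x = 0 := hzero
          have h2 := ae_iff.mp hzero'
          rw [Measure.restrict_apply hmeas] at h2
          simpa using h2
        refine measure_mono_null (fun x hx => ?_) hrest
        exact ⟨hx.2.2.2, hLsub ⟨hx.1, hx.2.1, hx.2.2.1⟩⟩
    refine measure_mono_null (fun x hx => ?_) (measure_iUnion_null hNq)
    obtain ⟨hxI, hxlt, hxg⟩ := hx
    have h1x : t ≤ G x := by rw [← hGa]; exact hGmono hxI.1.le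
    have h2x : G x ≤ t' := by rw [← hGb]; exact hGmono hxI.2
    have h0x : 0 < G x := lt_of_lt_of_le h0 h1x
    have h1x' : G x < 1 := lt_of_le_of_lt h2x h1
    obtain ⟨q, hq1, hq2⟩ := exists_rat_btwn hxlt
    have hGqx : G (q:ℝ) = G x := by
      refine le_antisymm (hGmono hq2.le) ?_
      have := hGmono hq1.le
      rwa [hGG _ h0x h1x'] at this
    refine mem_iUnion.mpr ⟨q, hxI, hGqx.symm, ?_, hxg⟩
    rw [hGqx]; exact hxlt
  -- a.e. bound on Ioc a b
  have hae : ∀ᵐ x, x ∈ Ioc a b → g x ≤ H := by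
    filter_upwards [measure_eq_zero_iff_ae_notMem.mp hNnull] with x hxN hxI
    by_cases hlt : Ginv (G x) < x
    · by_cases hg0 : g x = 0
      · rw [hg0]; exact hH0
      · exact absurd ⟨hxI, hlt, hg0⟩ hxN
    · have h1x : t ≤ G x := by rw [← hGa]; exact hGmono hxI.1.le
      have h0x : 0 < G x := lt_of_lt_of_le h0 h1x
      have hle' : Ginv (G x) ≤ x := hle x (G x) h0x le_rfl
      exact hpt x hxI (le_antisymm hle' (not_lt.mp hlt))
  have hconst : IntegrableOn (fun _ : ℝ => H) (Ioc a b) volume :=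
    integrableOn_const measure_Ioc_lt_top.ne
  have hmono := setIntegral_mono_on_ae (hf := hint.integrableOn) (hg := hconst)
    measurableSet_Ioc hae
  have hconst_val : ∫ _ in Ioc a b, H = (b - a) * H := by
    rw [setIntegral_const, Real.volume_real_Ioc_of_le hab]
    simp [smul_eq_mul]
  have hdiff : G b - G a = ∫ y in Ioc a b, g y := vz_diff hint hdensity hab
  have : t' - t ≤ (b - a) * H := by
    rw [← hGa, ← hGb, hdiff, ← hconst_val]; exact hmono
  exact this

/-- Van Zwet spread bound: if `g(G⁻¹(s)) ≤ √(c(s ∧ (1−s)))` for all `s ∈ (0,1)`,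
then `G` is at least as spread out as the symmetric triangular distribution on
`[−√(2/c), √(2/c)]`. -/
theorem van_zwet_triangular_spread_bound
    (G : ℝ → ℝ) (g : ℝ → ℝ)
    (hg_meas : Measurable g) (hg_nonneg : ∀ x, 0 ≤ g x)
    (hdensity : ∀ x, G x = ∫ y in Iic x, g y)
    (hprob : (∫ y, g y) = 1)
    (Ginv : ℝ → ℝ) (hGinv : ∀ u, Ginv u = sInf {x : ℝ | u ≤ G x})
    (c : ℝ) (hc : 0 < c)
    (hbound : ∀ s : ℝ, 0 < s → s < 1 →
      g (Ginv s) ≤ Real.sqrt (c * min s (1 - s)))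
    (Kinv : ℝ → ℝ)
    (hKinv : ∀ s, Kinv s =
      if s ≤ 1 / 2 then Real.sqrt (2 / c) * (Real.sqrt (2 * s) - 1)
      else Real.sqrt (2 / c) * (1 - Real.sqrt (2 * (1 - s)))) :
    ∀ u v : ℝ, 0 < u → u < v → v < 1 →
      Kinv v - Kinv u ≤ Ginv v - Ginv u := by
  intro u v hu huv hv
  have hint : Integrable g := vz_integrable hprob
  have hGmono : Monotone G := vz_mono hg_nonneg hint hdensity
  have hGcont : Continuous G := vz_cont hint hdensity
  have hK : Kinv = vzK c := funext fun s => by rw [hKinv s]; rfl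
  -- quantile facts
  have hbddA : ∀ t : ℝ, 0 < t → BddBelow {x | t ≤ G x} := by
    intro t ht
    obtain ⟨x₀, hx₀⟩ := vz_exists_lo hint hdensity ht
    refine ⟨x₀, fun y hy => ?_⟩
    by_contra hlt
    push_neg at hlt
    exact absurd (le_trans hy (hGmono hlt.le)) (not_le.mpr hx₀)
  have hneA : ∀ t : ℝ, t < 1 → {x | t ≤ G x}.Nonempty := fun t ht =>
    vz_exists_hi hint hprob hdensity ht
  have hle : ∀ x t : ℝ, 0 < t → t ≤ G x → Ginv t ≤ x := by
    intro x t ht hGx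
    rw [hGinv]
    exact csInf_le (hbddA t ht) hGx
  have hGG : ∀ s : ℝ, 0 < s → s < 1 → G (Ginv s) = s := by
    intro s hs0 hs1
    rw [hGinv]
    have hA : IsClosed {x : ℝ | s ≤ G x} := isClosed_le continuous_const hGcont
    have hmem := hA.csInf_mem (hneA s hs1) (hbddA s hs0)
    refine le_antisymm ?_ hmem
    by_contra hlt
    push_neg at hlt
    have hopen : IsOpen {x : ℝ | s < G x} := isOpen_lt continuous_const hGcont
    obtain ⟨ε, hε, hball⟩ := Metric.isOpen_iff.mp hopen _ hlt
    have hx : sInf {x : ℝ | s ≤ G x} - ε/2 ∈ {x : ℝ | s < G x} := by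
      apply hball
      rw [Metric.mem_ball, Real.dist_eq]
      rw [show sInf {x : ℝ | s ≤ G x} - ε/2 - sInf {x : ℝ | s ≤ G x} = -(ε/2) by ring,
        abs_neg, abs_of_nonneg (by linarith)]
      linarith
    have : sInf {x : ℝ | s ≤ G x} ≤ sInf {x : ℝ | s ≤ G x} - ε/2 :=
      csInf_le (hbddA s hs0) (show s ≤ _ from le_of_lt hx)
    linarith
  have hGinvMono : ∀ s t : ℝ, 0 < s → s ≤ t → t < 1 → Ginv s ≤ Ginv t := by
    intro s t hs hst ht
    rw [hGinv s, hGinv t]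
    exact csInf_le_csInf (hbddA s hs) (hneA t ht) (fun x hx => le_trans hst hx)
  set m := min u (1 - v) with hm
  have hm0 : 0 < m := lt_min hu (by linarith)
  -- the local step
  have step : ∀ δ : ℝ, 0 < δ → ∀ t t' : ℝ, u ≤ t → t ≤ t' → t' ≤ v →
      t' - t ≤ δ * (2 + δ) * m →
      Kinv t' - Kinv t ≤ (1 + δ) * (Ginv t' - Ginv t) := by
    intro δ hδ t t' hut htt' htv hsmall
    have h0t : 0 < t := lt_of_lt_of_le hu hut
    have ht'1 : t' < 1 := lt_of_le_of_lt htv hv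
    have ht1 : t < 1 := lt_of_le_of_lt htt' ht'1
    have h0t' : 0 < t' := lt_of_lt_of_le h0t htt'
    have hcrux := vz_crux hc hg_meas hg_nonneg hint hdensity hGmono hGcont hbound hGG hle
      h0t htt' ht'1
    set p := min (min t (1 - t)) (min t' (1 - t')) with hp
    have hKb : (Kinv t' - Kinv t) * Real.sqrt (c * p) ≤ t' - t := by
      rw [hK]; exact vzK_bound hc h0t htt' ht'1
    have hp0 : 0 < p := lt_min (lt_min h0t (by linarith)) (lt_min h0t' (by linarith))
    have hmp : m ≤ p := by
      refine le_min (le_min ?_ ?_) (le_min ?_ ?_)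
      · exact le_trans (min_le_left _ _) hut
      · exact le_trans (min_le_right _ _) (by linarith)
      · exact le_trans (min_le_left _ _) (le_trans hut htt')
      · exact le_trans (min_le_right _ _) (by linarith)
    have hq : min t' (1 - t) ≤ p + (t' - t) := by
      have h1 : min t' (1 - t) ≤ min t (1 - t) + (t' - t) := by
        rw [← min_add_add_right]
        exact min_le_min (by linarith) (by linarith)
      have h2 : min t' (1 - t) ≤ min t' (1 - t') + (t' - t) := by
        rw [← min_add_add_right]
        exact min_le_min (by linarith) (by linarith)
      rw [hp, ← min_add_add_right]
      exact le_min h1 h2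
    have hq2 : c * min t' (1 - t) ≤ (1 + δ) ^ 2 * (c * p) := by
      have : min t' (1 - t) ≤ (1 + δ) ^ 2 * p := by nlinarith [hq, hmp, hsmall]
      nlinarith [this, hc]
    have hsq : Real.sqrt (c * min t' (1 - t)) ≤ (1 + δ) * Real.sqrt (c * p) := by
      calc Real.sqrt (c * min t' (1 - t)) ≤ Real.sqrt ((1 + δ) ^ 2 * (c * p)) :=
            Real.sqrt_le_sqrt hq2
        _ = (1 + δ) * Real.sqrt (c * p) := by
            rw [Real.sqrt_mul (sq_nonneg _), Real.sqrt_sq (by linarith)]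
    have hΔ : 0 ≤ Ginv t' - Ginv t := by
      have := hGinvMono t t' h0t htt' ht'1; linarith
    have hsp0 : 0 < Real.sqrt (c * p) := Real.sqrt_pos.mpr (by positivity)
    have hfin : (Kinv t' - Kinv t) * Real.sqrt (c * p) ≤
        ((1 + δ) * (Ginv t' - Ginv t)) * Real.sqrt (c * p) := by
      calc (Kinv t' - Kinv t) * Real.sqrt (c * p) ≤ t' - t := hKb
        _ ≤ (Ginv t' - Ginv t) * Real.sqrt (c * min t' (1 - t)) := hcrux
        _ ≤ (Ginv t' - Ginv t) * ((1 + δ) * Real.sqrt (c * p)) :=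
            mul_le_mul_of_nonneg_left hsq hΔ
        _ = ((1 + δ) * (Ginv t' - Ginv t)) * Real.sqrt (c * p) := by ring
    exact le_of_mul_le_mul_right hfin hsp0
  -- δ-approximate global statement via continuous induction
  have main : ∀ δ : ℝ, 0 < δ → Kinv v - Kinv u ≤ (1 + δ) * (Ginv v - Ginv u) := by
    intro δ hδ
    set ε := δ * (2 + δ) * m with hε
    have hε0 : 0 < ε := by positivity
    set S := {t : ℝ | t ∈ Icc u v ∧ Kinv t - Kinv u ≤ (1 + δ) * (Ginv t - Ginv u)} with hS
    have huS : u ∈ S := ⟨⟨le_refl u, huv.le⟩, by simp⟩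
    have hbddS : BddAbove S := ⟨v, fun t ht => ht.1.2⟩
    set w := sSup S with hw
    have hut : ∀ t ∈ S, t ≤ w := fun t ht => le_csSup hbddS ht
    have huw : u ≤ w := hut u huS
    have hwv : w ≤ v := csSup_le ⟨u, huS⟩ (fun t ht => ht.1.2)
    have hwS : Kinv w - Kinv u ≤ (1 + δ) * (Ginv w - Ginv u) := by
      have hKc : Continuous Kinv := by rw [hK]; exact vzK_continuous c
      have hcl : IsClosed {t : ℝ | Kinv t ≤ (1 + δ) * (Ginv w - Ginv u) + Kinv u} :=
        isClosed_le hKc continuous_const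
      have hsub : S ⊆ {t : ℝ | Kinv t ≤ (1 + δ) * (Ginv w - Ginv u) + Kinv u} := by
        intro t ht
        have h1 : Ginv t ≤ Ginv w :=
          hGinvMono t w (lt_of_lt_of_le hu ht.1.1) (hut t ht) (lt_of_le_of_lt hwv hv)
        have h2 := ht.2
        have h3 : (1 + δ) * (Ginv t - Ginv u) ≤ (1 + δ) * (Ginv w - Ginv u) := by
          apply mul_le_mul_of_nonneg_left (by linarith) (by linarith)
        simp only [mem_setOf_eq]
        linarith
      have hwcl : Kinv w ≤ (1 + δ) * (Ginv w - Ginv u) + Kinv u :=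
        hcl.closure_subset_iff.mpr hsub (csSup_mem_closure ⟨u, huS⟩ hbddS)
      linarith
    rcases eq_or_lt_of_le hwv with heq | hlt
    · rw [heq] at hwS; exact hwS
    · exfalso
      set t' := min v (w + ε) with ht'
      have hwt' : w < t' := lt_min hlt (by linarith)
      have ht'v : t' ≤ v := min_le_left _ _
      have hstep := step δ hδ w t' huw hwt'.le ht'v
        (by have h5 : t' ≤ w + ε := min_le_right _ _; rw [hε] at h5; linarith)
      have hsum : (1 + δ) * (Ginv t' - Ginv w) + (1 + δ) * (Ginv w - Ginv u)
          = (1 + δ) * (Ginv t' - Ginv u) := by ring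
      have ht'S : t' ∈ S := ⟨⟨le_trans huw hwt'.le, ht'v⟩, by linarith⟩
      exact absurd (hut t' ht'S) (not_le.mpr hwt')
  -- let δ → 0
  have hΔ0 : 0 ≤ Ginv v - Ginv u := by
    have := hGinvMono u v hu huv.le hv; linarith
  by_contra hcon
  push_neg at hcon
  set Δ := Ginv v - Ginv u with hΔ
  set KK := Kinv v - Kinv u with hKK
  have hd : 0 < KK - Δ := by linarith
  set δ₀ := (KK - Δ) / (2 * (Δ + 1)) with hδ₀
  have hδ₀0 : 0 < δ₀ := by positivity
  have hmul : δ₀ * (2 * (Δ + 1)) = KK - Δ := by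
    rw [hδ₀]; field_simp
  have hfin := main δ₀ hδ₀0
  nlinarith [hfin, hmul, hΔ0, hδ₀0]
end

section
/- Trigonometric spread bound: If G is an absolutely continuous distribution function on ℝ with density g satisfying g(G^{-1}(s)) ≤ (c·s(1−s))^{1/2} for all s ∈ (0,1), with c > 0, then for all 0 < u < v < 1, G^{-1}(v) − G^{-1}(u) ≥ K^{-1}(v) − K^{-1}(u), where K(x) = (1 + sin(√c · x))/2 for |x| ≤ π/(2√c), i.e. K^{-1}(s) = (1/√c)·arcsin(2s − 1). -/
open MeasureTheory Set Filter Topology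

set_option maxHeartbeats 1000000 in
/-- Trigonometric spread bound: if `g(G⁻¹(s)) ≤ √(c·s(1−s))` for all `s ∈ (0,1)`,
then `G` is at least as spread out as the trigonometric distribution with
quantile function `K⁻¹(s) = (1/√c)·arcsin(2s − 1)`. -/
theorem trigonometric_spread_bound
    (G : ℝ → ℝ) (g : ℝ → ℝ)
    (hg_meas : Measurable g) (hg_nonneg : ∀ x, 0 ≤ g x)
    (hdensity : ∀ x, G x = ∫ y in Iic x, g y)
    (hprob : (∫ y, g y) = 1)
    (Ginv : ℝ → ℝ) (hGinv : ∀ u, Ginv u = sInf {x : ℝ | u ≤ G x})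
    (c : ℝ) (hc : 0 < c)
    (hbound : ∀ s : ℝ, 0 < s → s < 1 →
      g (Ginv s) ≤ Real.sqrt (c * (s * (1 - s)))) :
    ∀ u v : ℝ, 0 < u → u < v → v < 1 →
      (1 / Real.sqrt c) * (Real.arcsin (2 * v - 1) - Real.arcsin (2 * u - 1))
        ≤ Ginv v - Ginv u := by
  intro u v hu huv hv
  have hg_int : Integrable g := by
    by_contra h
    rw [MeasureTheory.integral_undef h] at hprob; norm_num at hprob
  have hdiff : ∀ x y : ℝ, G y - G x = ∫ z in x..y, g z := by
    intro x y
    rw [hdensity x, hdensity y]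
    exact intervalIntegral.integral_Iic_sub_Iic (hg_int.integrableOn (s := Iic x))
      (hg_int.integrableOn (s := Iic y))
  have hG_mono : Monotone G := by
    intro x y hxy
    have h := hdiff x y
    have h2 : 0 ≤ ∫ z in x..y, g z :=
      intervalIntegral.integral_nonneg hxy (fun z _ => hg_nonneg z)
    linarith
  have hG_cont : Continuous G := by
    have h0 : ∀ x, G x = G 0 + ∫ z in (0:ℝ)..x, g z := fun x => by have := hdiff 0 x; linarith
    have : Continuous fun x => G 0 + ∫ z in (0:ℝ)..x, g z :=
      continuous_const.add
        (intervalIntegral.continuous_primitive (fun a b => hg_int.intervalIntegrable) 0)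
    exact this.congr (fun x => (h0 x).symm)
  have h_tend1 : Tendsto (fun n : ℕ => G n) atTop (𝓝 1) := by
    have hU : (⋃ n : ℕ, Iic (n : ℝ)) = univ := by
      ext x; simp only [mem_iUnion, mem_Iic, mem_univ, iff_true]
      obtain ⟨n, hn⟩ := exists_nat_ge x; exact ⟨n, hn⟩
    have := tendsto_setIntegral_of_monotone (f := g) (μ := volume)
      (s := fun n : ℕ => Iic (n:ℝ)) (fun n => measurableSet_Iic)
      (fun m n hmn => Iic_subset_Iic.2 (by exact_mod_cast hmn)) (by rw [hU]; exact hg_int.integrableOn)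
    rw [hU] at this
    simp only [MeasureTheory.setIntegral_univ, hprob] at this
    exact this.congr (fun n => (hdensity n).symm)
  have h_tend0 : Tendsto (fun n : ℕ => G (-n)) atTop (𝓝 0) := by
    have hU : (⋃ n : ℕ, Ioi (-(n : ℝ))) = univ := by
      ext x; simp only [mem_iUnion, mem_Ioi, mem_univ, iff_true]
      obtain ⟨n, hn⟩ := exists_nat_gt (-x); exact ⟨n, by linarith⟩
    have ht := tendsto_setIntegral_of_monotone (f := g) (μ := volume)
      (s := fun n : ℕ => Ioi (-(n:ℝ))) (fun n => measurableSet_Ioi)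
      (fun m n hmn => Ioi_subset_Ioi (by exact_mod_cast neg_le_neg (Nat.cast_le.2 hmn)))
      (by rw [hU]; exact hg_int.integrableOn)
    rw [hU] at ht
    simp only [MeasureTheory.setIntegral_univ, hprob] at ht
    have hcompl : ∀ n : ℕ, G (-n) = 1 - ∫ z in Ioi (-(n:ℝ)), g z := by
      intro n
      have := MeasureTheory.integral_add_compl (measurableSet_Iic (a := (-(n:ℝ)))) hg_int
      rw [hprob, compl_Iic] at this
      rw [hdensity]; push_cast; linarith
    have : Tendsto (fun n : ℕ => 1 - ∫ z in Ioi (-(n:ℝ)), g z) atTop (𝓝 (1 - 1)) :=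
      tendsto_const_nhds.sub ht
    rw [sub_self] at this
    exact this.congr (fun n => (hcompl n).symm)
  -- quantile facts
  have h_exists_ge : ∀ s : ℝ, s < 1 → ∃ x, s ≤ G x := by
    intro s hs
    by_contra h; push_neg at h
    have h1 : (1:ℝ) ≤ s :=
      le_of_tendsto h_tend1 (Eventually.of_forall (fun n => (h n).le))
    linarith
  have hS_bdd : ∀ s : ℝ, 0 < s → BddBelow {x | s ≤ G x} := by
    intro s hs
    have : ∃ x, G x < s := by
      by_contra h; push_neg at h
      have h1 : s ≤ 0 :=
        ge_of_tendsto h_tend0 (Eventually.of_forall (fun n => h _))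
      linarith
    obtain ⟨x₀, hx₀⟩ := this
    refine ⟨x₀, fun y hy => ?_⟩
    by_contra hlt; push_neg at hlt
    exact absurd (le_trans hy (hG_mono hlt.le)) (not_le.2 hx₀)
  have hGinv_mem : ∀ s : ℝ, 0 < s → s < 1 → s ≤ G (Ginv s) := by
    intro s h0 h1
    rw [hGinv]
    have hclosed : IsClosed {x | s ≤ G x} := isClosed_le continuous_const hG_cont
    exact (hclosed.csInf_mem (h_exists_ge s h1) (hS_bdd s h0))
  have hGinv_le : ∀ s x : ℝ, 0 < s → s ≤ G x → Ginv s ≤ x := by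
    intro s x h0 h
    rw [hGinv]; exact csInf_le (hS_bdd s h0) h
  have hG_Ginv : ∀ s : ℝ, 0 < s → s < 1 → G (Ginv s) = s := by
    intro s h0 h1
    refine le_antisymm ?_ (hGinv_mem s h0 h1)
    by_contra h; push_neg at h
    have hev : ∀ᶠ y in 𝓝 (Ginv s), s < G y :=
      hG_cont.continuousAt.eventually (eventually_gt_nhds h)
    have hev2 : ∀ᶠ y in 𝓝[<] (Ginv s), s < G y := hev.filter_mono nhdsWithin_le_nhds
    obtain ⟨y, hy1, hy2⟩ := (hev2.and self_mem_nhdsWithin).exists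
    exact absurd (hGinv_le s y h0 hy1.le) (not_le.2 hy2)
  have hGinv_mono : ∀ r t : ℝ, 0 < r → r ≤ t → t < 1 → Ginv r ≤ Ginv t := by
    intro r t h0 hrt h1
    exact hGinv_le r (Ginv t) h0 (le_trans hrt (hGinv_mem t (lt_of_lt_of_le h0 hrt) h1))
  have hu1 : u < 1 := huv.trans hv
  have h0v : 0 < v := hu.trans huv
  have hGa : G (Ginv u) = u := hG_Ginv u hu hu1
  have hGb : G (Ginv v) = v := hG_Ginv v h0v hv
  have hab : Ginv u ≤ Ginv v := hGinv_mono u v hu huv.le hv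
  set p : ℝ → ℝ := fun s => Real.sqrt (c * (s * (1 - s))) with hp_def
  have hp_pos : ∀ s : ℝ, 0 < s → s < 1 → 0 < p s := by
    intro s h0 h1
    simp only [hp_def]
    exact Real.sqrt_pos.2 (mul_pos hc (mul_pos h0 (by linarith)))
  set pm : ℝ := min (p u) (p v) with hpm_def
  have hpm : 0 < pm := lt_min (hp_pos u hu hu1) (hp_pos v h0v hv)
  set L : ℝ := c / (2 * pm) with hL_def
  have hL : 0 ≤ L := by positivity
  -- p is at least the min of its endpoint values on subintervals
  have hp_lb : ∀ r t σ : ℝ, r ≤ σ → σ ≤ t → min (p r) (p t) ≤ p σ := by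
    intro r t σ h1 h2
    simp only [hp_def]
    rcases le_total (r * (1 - r)) (t * (1 - t)) with h | h
    · refine le_trans (min_le_left _ _) (Real.sqrt_le_sqrt ?_)
      have hq : r * (1 - r) ≤ σ * (1 - σ) := by
        rcases le_or_gt (r + σ) 1 with hs | hs
        · nlinarith [mul_nonneg (sub_nonneg.2 h1) (by linarith : (0:ℝ) ≤ 1 - σ - r)]
        · nlinarith [mul_nonneg (sub_nonneg.2 h2) (by linarith : (0:ℝ) ≤ t + σ - 1)]
      nlinarith
    · refine le_trans (min_le_right _ _) (Real.sqrt_le_sqrt ?_)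
      have hq : t * (1 - t) ≤ σ * (1 - σ) := by
        rcases le_or_gt (σ + t) 1 with hs | hs
        · nlinarith [mul_nonneg (sub_nonneg.2 h1) (by linarith : (0:ℝ) ≤ 1 - σ - r)]
        · nlinarith [mul_nonneg (sub_nonneg.2 h2) (by linarith : (0:ℝ) ≤ t + σ - 1)]
      nlinarith
  have hp_nonneg : ∀ s : ℝ, 0 ≤ p s := fun s => by simp only [hp_def]; exact Real.sqrt_nonneg _
  have hp_sq : ∀ s : ℝ, 0 ≤ s → s ≤ 1 → p s ^ 2 = c * (s * (1 - s)) := by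
    intro s h0 h1
    simp only [hp_def]
    exact Real.sq_sqrt (mul_nonneg hc.le (mul_nonneg h0 (by linarith)))
  have hL2 : L * (2 * pm) = c := by
    rw [hL_def]; exact div_mul_cancel₀ c (by positivity)
  have hp_lip : ∀ r t : ℝ, u ≤ r → r ≤ t → t ≤ v →
      p t ≤ p r + L * (t - r) ∧ p r ≤ p t + L * (t - r) := by
    intro r t h1 h2 h3
    have h0r : 0 ≤ r := le_trans hu.le h1
    have h0t : 0 ≤ t := le_trans h0r h2
    have hr1 : r ≤ 1 := le_trans (h2.trans h3) hv.le
    have ht1 : t ≤ 1 := le_trans h3 hv.le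
    have hpr : pm ≤ p r := hp_lb u v r h1 (h2.trans h3)
    have hpt : pm ≤ p t := hp_lb u v t (h1.trans h2) h3
    have hsr := hp_sq r h0r hr1
    have hst := hp_sq t h0t ht1
    have key1 : (p t - p r) * (p t + p r) ≤ c * (t - r) := by
      nlinarith [hsr, hst, mul_nonneg (mul_nonneg hc.le (sub_nonneg.2 h2)) (add_nonneg h0r h0t)]
    have key2 : (p r - p t) * (p t + p r) ≤ c * (t - r) := by
      nlinarith [hsr, hst, mul_nonneg (mul_nonneg hc.le (sub_nonneg.2 h2))
        (by linarith : (0:ℝ) ≤ 2 - t - r)]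
    constructor
    · rcases le_total (p t) (p r) with hcase | hcase
      · nlinarith [mul_nonneg hL (sub_nonneg.2 h2)]
      · nlinarith [key1, hL2, mul_nonneg (sub_nonneg.2 hcase)
          (by linarith : (0:ℝ) ≤ p t + p r - 2 * pm)]
    · rcases le_total (p r) (p t) with hcase | hcase
      · nlinarith [mul_nonneg hL (sub_nonneg.2 h2)]
      · nlinarith [key2, hL2, mul_nonneg (sub_nonneg.2 hcase)
          (by linarith : (0:ℝ) ≤ p t + p r - 2 * pm)]
  have hp_ub : ∀ r t σ : ℝ, u ≤ r → r ≤ σ → σ ≤ t → t ≤ v →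
      p σ ≤ min (p r) (p t) + L * (t - r) := by
    intro r t σ h1 h2 h3 h4
    rcases le_total (p r) (p t) with h | h
    · rw [min_eq_left h]
      have h5 := (hp_lip r σ h1 h2 (h3.trans h4)).1
      have hLm : L * (σ - r) ≤ L * (t - r) := mul_le_mul_of_nonneg_left (by linarith) hL
      linarith
    · rw [min_eq_right h]
      have h5 := (hp_lip σ t (h1.trans h2) h3 h4).2
      have hLm : L * (t - σ) ≤ L * (t - r) := mul_le_mul_of_nonneg_left (by linarith) hL
      linarith
  set f : ℝ → ℝ := fun s => 1 / Real.sqrt c * Real.arcsin (2 * s - 1) with hf_def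
  have hsqrtc : (0:ℝ) < Real.sqrt c := Real.sqrt_pos.2 hc
  have hf_deriv : ∀ s : ℝ, 0 < s → s < 1 → HasDerivAt f (1 / p s) s := by
    intro s h0 h1
    have h₁ : (2 * s - 1) ≠ -1 := by intro h; linarith
    have h₂ : (2 * s - 1) ≠ 1 := by intro h; linarith
    have ha := Real.hasDerivAt_arcsin h₁ h₂
    have hl : HasDerivAt (fun y : ℝ => 2 * y - 1) 2 s := by
      have := ((hasDerivAt_id s).const_mul (2:ℝ)).sub_const (1:ℝ)
      simpa using this
    have hcomp := ha.comp s hl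
    have hfinal := hcomp.const_mul (1 / Real.sqrt c)
    have hss : 0 < Real.sqrt (s * (1 - s)) := Real.sqrt_pos.2 (mul_pos h0 (by linarith))
    have heq : 1 / Real.sqrt c * (1 / Real.sqrt (1 - (2 * s - 1) ^ 2) * 2) = 1 / p s := by
      have e1 : 1 - (2 * s - 1) ^ 2 = 4 * (s * (1 - s)) := by ring
      have e2 : Real.sqrt (4 * (s * (1 - s))) = 2 * Real.sqrt (s * (1 - s)) := by
        rw [show (4:ℝ) * (s * (1 - s)) = 2 ^ 2 * (s * (1 - s)) by norm_num,
          Real.sqrt_mul (by positivity) _, Real.sqrt_sq (by norm_num : (0:ℝ) ≤ 2)]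
      have e3 : p s = Real.sqrt c * Real.sqrt (s * (1 - s)) := by
        simp only [hp_def]; rw [Real.sqrt_mul hc.le]
      have h1' : Real.sqrt c ≠ 0 := ne_of_gt hsqrtc
      have h2' : Real.sqrt s ≠ 0 := by positivity
      have h3' : Real.sqrt (1 - s) ≠ 0 := by
        have : (0:ℝ) < 1 - s := by linarith
        positivity
      rw [e1, e2, e3]
      field_simp
    rw [heq] at hfinal
    exact hfinal
  have hf_piece : ∀ r t : ℝ, u ≤ r → r ≤ t → t ≤ v →
      f t - f r ≤ (1 / min (p r) (p t)) * (t - r) := by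
    intro r t h1 h2 h3
    have hm_pos : 0 < min (p r) (p t) :=
      lt_min (hp_pos r (lt_of_lt_of_le hu h1) (lt_of_le_of_lt (h2.trans h3) hv))
        (hp_pos t (lt_of_lt_of_le hu (h1.trans h2)) (lt_of_le_of_lt h3 hv))
    have hd : ∀ y ∈ Icc r t, HasDerivWithinAt f (1 / p y) (Icc r t) y := by
      intro y hy
      exact (hf_deriv y (lt_of_lt_of_le hu (h1.trans hy.1))
        (lt_of_le_of_lt (hy.2.trans h3) hv)).hasDerivWithinAt
    have hbd : ∀ y ∈ Ico r t, ‖1 / p y‖ ≤ 1 / min (p r) (p t) := by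
      intro y hy
      have hpy : min (p r) (p t) ≤ p y := hp_lb r t y hy.1 hy.2.le
      have hpy0 : 0 < p y := lt_of_lt_of_le hm_pos hpy
      rw [Real.norm_eq_abs, abs_of_nonneg (by positivity)]
      exact one_div_le_one_div_of_le hm_pos hpy
    have hres := norm_image_sub_le_of_norm_deriv_le_segment' hd hbd t (right_mem_Icc.2 h2)
    calc f t - f r ≤ ‖f t - f r‖ := le_abs_self _
      _ ≤ 1 / min (p r) (p t) * (t - r) := hres
  have h_flat : ∀ q : ℝ, ∀ᵐ z : ℝ, ((q < z ∧ z ≤ Ginv v) ∧ G z = G q) → g z = 0 := by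
    intro q
    by_cases hqb : q ≤ Ginv v
    · set C := Icc q (Ginv v) ∩ G ⁻¹' {G q} with hC
      have hCne : C.Nonempty := ⟨q, ⟨le_refl q, hqb⟩, rfl⟩
      have hCclosed : IsClosed C :=
        isClosed_Icc.inter (IsClosed.preimage hG_cont isClosed_singleton)
      have hCbdd : BddAbove C := ⟨Ginv v, fun x hx => hx.1.2⟩
      set e := sSup C with he
      have heC : e ∈ C := hCclosed.csSup_mem hCne hCbdd
      have hqe : q ≤ e := le_csSup hCbdd ⟨⟨le_refl q, hqb⟩, rfl⟩
      have hGe : G e = G q := heC.2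
      have hint : ∫ z in Ioc q e, g z = 0 := by
        have h1 := hdiff q e
        rw [intervalIntegral.integral_of_le hqe] at h1
        rw [← h1, hGe]; ring
      have hae0 := (MeasureTheory.integral_eq_zero_iff_of_nonneg hg_nonneg
        (hg_int.integrableOn (s := Ioc q e))).1 hint
      have h2 : ∀ᵐ z : ℝ, z ∈ Ioc q e → g z = 0 :=
        (ae_restrict_iff' measurableSet_Ioc).1 hae0
      filter_upwards [h2] with z hz hzq
      exact hz ⟨hzq.1.1, le_csSup hCbdd ⟨⟨hzq.1.1.le, hzq.1.2⟩, hzq.2⟩⟩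
    · filter_upwards with z hz
      exact absurd (hz.1.1.trans_le hz.1.2).le hqb
  have h_ae : ∀ᵐ z : ℝ, z ∈ Ioo (Ginv u) (Ginv v) → g z ≤ p (G z) := by
    have hall : ∀ᵐ z : ℝ, ∀ q : ℚ, (((q:ℝ) < z ∧ z ≤ Ginv v) ∧ G z = G (q:ℝ)) → g z = 0 :=
      (MeasureTheory.ae_all_iff).2 fun q => h_flat (q : ℝ)
    filter_upwards [hall] with z hz hmem
    have hsu : u ≤ G z := hGa ▸ hG_mono hmem.1.le
    have hsv : G z ≤ v := hGb ▸ hG_mono hmem.2.le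
    have h0 : 0 < G z := lt_of_lt_of_le hu hsu
    have h1 : G z < 1 := lt_of_le_of_lt hsv hv
    have hle : Ginv (G z) ≤ z := hGinv_le (G z) z h0 (le_refl _)
    rcases eq_or_lt_of_le hle with heq | hlt
    · simp only [hp_def]
      have hb2 := hbound (G z) h0 h1
      rwa [heq] at hb2
    · obtain ⟨q, hq1, hq2⟩ := exists_rat_btwn hlt
      have e1 : G (Ginv (G z)) = G z := hG_Ginv _ h0 h1
      have hA : G z ≤ G (q:ℝ) := by rw [← e1]; exact hG_mono hq1.le
      have hgz : g z = 0 := hz q ⟨⟨hq2, hmem.2.le⟩, le_antisymm hA (hG_mono hq2.le)⟩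
      rw [hgz]; exact hp_nonneg _
  have hba : 0 ≤ Ginv v - Ginv u := sub_nonneg.2 hab
  have main : ∀ n : ℕ, 1 ≤ n →
      f v - f u ≤ (1 + L * ((v - u) / (n:ℝ)) / pm) * (Ginv v - Ginv u) := by
    intro n hn
    have hn0 : (0:ℝ) < n := by exact_mod_cast hn
    set δ : ℝ := (v - u) / (n:ℝ) with hδ_def
    have hδ : 0 < δ := div_pos (by linarith) hn0
    set K : ℝ := L * δ / pm with hK_def
    have hK0 : 0 ≤ K := by positivity
    have hKpm : K * pm = L * δ := by
      rw [hK_def]; exact div_mul_cancel₀ _ (ne_of_gt hpm)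
    set sq : ℕ → ℝ := fun i => u + (i:ℝ) * δ with hsq_def
    have hsq_succ : ∀ i : ℕ, sq (i + 1) = sq i + δ := by
      intro i; simp only [hsq_def]; push_cast; ring
    have hsq0 : sq 0 = u := by simp [hsq_def]
    have hsqn : sq n = v := by
      simp only [hsq_def, hδ_def]
      field_simp
      ring
    have hsq_mem : ∀ i : ℕ, i ≤ n → u ≤ sq i ∧ sq i ≤ v := by
      intro i hi
      have h1 : 0 ≤ (i:ℝ) * δ := mul_nonneg (Nat.cast_nonneg i) hδ.le
      have h2 : (i:ℝ) * δ ≤ (n:ℝ) * δ :=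
        mul_le_mul_of_nonneg_right (by exact_mod_cast hi) hδ.le
      have hnδ : (n:ℝ) * δ = v - u := by
        rw [hδ_def]; field_simp
      constructor
      · simp only [hsq_def]; linarith
      · simp only [hsq_def]; linarith
    have hkey : ∀ i ∈ Finset.range n,
        f (sq (i + 1)) - f (sq i) ≤ (Ginv (sq (i + 1)) - Ginv (sq i)) * (1 + K) := by
      intro i hi
      rw [Finset.mem_range] at hi
      obtain ⟨hui, hiv⟩ := hsq_mem i hi.le
      obtain ⟨hui1, hiv1⟩ := hsq_mem (i + 1) hi
      have hrt : sq i ≤ sq (i + 1) := by rw [hsq_succ]; linarith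
      have h0r : 0 < sq i := lt_of_lt_of_le hu hui
      have hr1 : sq i < 1 := lt_of_le_of_lt hiv hv
      have h0t : 0 < sq (i + 1) := lt_of_lt_of_le hu hui1
      have ht1 : sq (i + 1) < 1 := lt_of_le_of_lt hiv1 hv
      set m : ℝ := min (p (sq i)) (p (sq (i + 1))) with hm_def
      have hm_pos : 0 < m := lt_min (hp_pos _ h0r hr1) (hp_pos _ h0t ht1)
      have hmpm : pm ≤ m := le_min (hp_lb u v _ hui hiv) (hp_lb u v _ hui1 hiv1)
      have step1 : f (sq (i + 1)) - f (sq i) ≤ (1 / m) * δ := by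
        have h5 := hf_piece (sq i) (sq (i + 1)) hui hrt hiv1
        rw [show sq (i + 1) - sq i = δ from by rw [hsq_succ]; ring, ← hm_def] at h5
        exact h5
      have hxle : Ginv (sq i) ≤ Ginv (sq (i + 1)) := hGinv_mono _ _ h0r hrt ht1
      have hax : Ginv u ≤ Ginv (sq i) := hGinv_mono u _ hu hui hr1
      have hxb : Ginv (sq (i + 1)) ≤ Ginv v := hGinv_mono _ v h0t hiv1 hv
      have hGxi : G (Ginv (sq i)) = sq i := hG_Ginv _ h0r hr1
      have hGxi1 : G (Ginv (sq (i + 1))) = sq (i + 1) := hG_Ginv _ h0t ht1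
      have hδeq : δ = ∫ z in Ioc (Ginv (sq i)) (Ginv (sq (i + 1))), g z := by
        have hd := hdiff (Ginv (sq i)) (Ginv (sq (i + 1)))
        rw [intervalIntegral.integral_of_le hxle] at hd
        rw [← hd, hGxi, hGxi1, hsq_succ]; ring
      have haeM : ∀ᵐ z ∂(volume.restrict (Ioc (Ginv (sq i)) (Ginv (sq (i + 1))))),
          g z ≤ m + L * δ := by
        have hbne : ∀ᵐ z : ℝ, z ≠ Ginv v := by
          rw [ae_iff]
          simp only [ne_eq, not_not, setOf_eq_eq_singleton]
          exact measure_singleton _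
        filter_upwards [ae_restrict_mem measurableSet_Ioc, ae_restrict_of_ae h_ae,
          ae_restrict_of_ae hbne] with z hz1 hz2 hz3
        have hzo : z ∈ Ioo (Ginv u) (Ginv v) :=
          ⟨lt_of_le_of_lt hax hz1.1, lt_of_le_of_ne (hz1.2.trans hxb) hz3⟩
        refine le_trans (hz2 hzo) ?_
        have hGz1 : sq i ≤ G z := by rw [← hGxi]; exact hG_mono hz1.1.le
        have hGz2 : G z ≤ sq (i + 1) := by rw [← hGxi1]; exact hG_mono hz1.2
        have h6 := hp_ub (sq i) (sq (i + 1)) (G z) hui hGz1 hGz2 hiv1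
        rw [show sq (i + 1) - sq i = δ from by rw [hsq_succ]; ring, ← hm_def] at h6
        exact h6
      have step2 : δ ≤ (Ginv (sq (i + 1)) - Ginv (sq i)) * (m + L * δ) := by
        have hint2 : (∫ z in Ioc (Ginv (sq i)) (Ginv (sq (i + 1))), g z)
            ≤ ∫ _z in Ioc (Ginv (sq i)) (Ginv (sq (i + 1))), (m + L * δ) := by
          refine MeasureTheory.integral_mono_ae hg_int.integrableOn ?_ haeM
          exact MeasureTheory.integrableOn_const measure_Ioc_lt_top.ne
        have hconst : (∫ _z in Ioc (Ginv (sq i)) (Ginv (sq (i + 1))), (m + L * δ))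
            = (m + L * δ) * (Ginv (sq (i + 1)) - Ginv (sq i)) := by
          rw [MeasureTheory.setIntegral_const, measureReal_def, Real.volume_Ioc, smul_eq_mul,
            ENNReal.toReal_ofReal (sub_nonneg.2 hxle)]
          ring
        rw [hconst, ← hδeq] at hint2
        linarith [hint2]
      have hΔx : 0 ≤ Ginv (sq (i + 1)) - Ginv (sq i) := sub_nonneg.2 hxle
      have A' : m * (f (sq (i + 1)) - f (sq i)) ≤ δ := by
        have h7 := mul_le_mul_of_nonneg_left step1 hm_pos.le
        rwa [show m * (1 / m * δ) = δ from by field_simp] at h7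
      have hKΔ : (Ginv (sq (i + 1)) - Ginv (sq i)) * (K * pm)
          = (Ginv (sq (i + 1)) - Ginv (sq i)) * (L * δ) := by rw [hKpm]
      have e2 : (Ginv (sq (i + 1)) - Ginv (sq i)) * K * pm
          ≤ (Ginv (sq (i + 1)) - Ginv (sq i)) * K * m :=
        mul_le_mul_of_nonneg_left hmpm (mul_nonneg hΔx hK0)
      have e3 : m * (f (sq (i + 1)) - f (sq i))
          ≤ (Ginv (sq (i + 1)) - Ginv (sq i)) * m
            + (Ginv (sq (i + 1)) - Ginv (sq i)) * K * m := by
        have e1 : (Ginv (sq (i + 1)) - Ginv (sq i)) * (K * pm)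
            = (Ginv (sq (i + 1)) - Ginv (sq i)) * (L * δ) := by rw [hKpm]
        linarith [A', step2, e1, e2]
      exact (mul_le_mul_iff_right₀ hm_pos).1 (by linarith [e3])
    have hsum1 : ∑ i ∈ Finset.range n, (f (sq (i + 1)) - f (sq i)) = f v - f u := by
      rw [Finset.sum_range_sub (fun i => f (sq i)), hsq0, hsqn]
    have hsum2 : ∑ i ∈ Finset.range n, (Ginv (sq (i + 1)) - Ginv (sq i))
        = Ginv v - Ginv u := by
      rw [Finset.sum_range_sub (fun i => Ginv (sq i)), hsq0, hsqn]
    calc f v - f u = ∑ i ∈ Finset.range n, (f (sq (i + 1)) - f (sq i)) := hsum1.symm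
      _ ≤ ∑ i ∈ Finset.range n, (Ginv (sq (i + 1)) - Ginv (sq i)) * (1 + K) :=
          Finset.sum_le_sum hkey
      _ = (∑ i ∈ Finset.range n, (Ginv (sq (i + 1)) - Ginv (sq i))) * (1 + K) :=
          (Finset.sum_mul _ _ _).symm
      _ = (1 + K) * (Ginv v - Ginv u) := by rw [hsum2]; ring
  have hlim : Tendsto (fun n : ℕ => (1 + L * ((v - u) / (n:ℝ)) / pm) * (Ginv v - Ginv u))
      atTop (𝓝 ((1 + 0) * (Ginv v - Ginv u))) := by
    have h1 : Tendsto (fun n : ℕ => L * ((v - u) / (n:ℝ)) / pm) atTop (𝓝 0) := by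
      have h2 := tendsto_const_div_atTop_nhds_zero_nat (L * (v - u) / pm)
      have h3 : (fun n : ℕ => L * (v - u) / pm / (n:ℝ))
          = fun n : ℕ => L * ((v - u) / (n:ℝ)) / pm := by
        funext n; ring
      rwa [h3] at h2
    exact ((tendsto_const_nhds.add h1).mul tendsto_const_nhds)
  have hfinal : f v - f u ≤ Ginv v - Ginv u := by
    have h8 := ge_of_tendsto hlim (eventually_atTop.2 ⟨1, fun n hn => main n hn⟩)
    simpa using h8
  have hgoal : 1 / Real.sqrt c * (Real.arcsin (2 * v - 1) - Real.arcsin (2 * u - 1))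
      = f v - f u := by
    simp only [hf_def]; ring
  rw [hgoal]
  exact hfinal
end
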